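/- The family B = {B ⊆ [n] : |B ∩ [r+t]| ≤ 1}, where n > r+t, is non-trivial and r-wise t-agreeing, and has size (r+t+1)·2^(n-r-t). -/

import Mathlib

open Finset

def agreeSet {n r : ℕ} (f : Fin r → Finset (Fin n)) : Finset (Fin n) :=
  Finset.univ.filter (fun x => (∀ i, x ∈ f i) ∨ (∀ i, x ∉ f i))

def AgreeingFamily (n r t : ℕ) (F : Finset (Finset (Fin n))) : Prop :=
  ∀ f : Fin r → Finset (Fin n), (∀ i, f i ∈ F) → t ≤ (agreeSet f).card

def NonTrivialFamily (n : ℕ) (F : Finset (Finset (Fin n))) : Prop :=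
  (∀ x : Fin n, ∃ A ∈ F, x ∉ A) ∧ (∀ x : Fin n, ∃ A ∈ F, x ∈ A)

/-- `{1, ..., r+t}` viewed inside `Fin n`: the first `r + t` coordinates. -/
def firstCoords (n m : ℕ) : Finset (Fin n) :=
  Finset.univ.filter (fun x => (x : ℕ) < m)

lemma firstCoords_card (n m : ℕ) (hm : m ≤ n) : (firstCoords n m).card = m := by
  have : firstCoords n m = Finset.image (Fin.castLE hm) Finset.univ := by
    ext x
    simp only [firstCoords, mem_filter, mem_univ, true_and, mem_image]
    constructor
    · intro hx
      exact ⟨⟨(x : ℕ), hx⟩, Fin.ext rfl⟩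
    · rintro ⟨y, rfl⟩
      exact y.isLt
  rw [this, Finset.card_image_of_injective _ (Fin.castLE_injective hm)]
  simp

theorem stmt3 (n r t : ℕ) (h : r + t < n) :
    NonTrivialFamily n
      (Finset.univ.filter (fun B : Finset (Fin n) => (B ∩ firstCoords n (r + t)).card ≤ 1)) ∧
    AgreeingFamily n r t
      (Finset.univ.filter (fun B : Finset (Fin n) => (B ∩ firstCoords n (r + t)).card ≤ 1)) ∧
    (Finset.univ.filter (fun B : Finset (Fin n) => (B ∩ firstCoords n (r + t)).card ≤ 1)).card
      = (r + t + 1) * 2 ^ (n - r - t) := by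
  set S : Finset (Fin n) := firstCoords n (r + t) with hS
  have hScard : S.card = r + t := firstCoords_card n (r + t) h.le
  refine ⟨⟨?_, ?_⟩, ?_, ?_⟩
  · intro x
    exact ⟨∅, by simp, by simp⟩
  · intro x
    refine ⟨{x}, ?_, by simp⟩
    simp only [mem_filter, mem_univ, true_and]
    exact le_trans (card_le_card (inter_subset_left)) (by simp)
  · -- agreeing
    intro f hf
    set V : Finset (Fin n) := Finset.univ.biUnion (fun i => f i ∩ S) with hV
    have hVcard : V.card ≤ r := by
      calc V.card ≤ ∑ i : Fin r, (f i ∩ S).card := card_biUnion_le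
        _ ≤ ∑ _i : Fin r, 1 := by
            apply Finset.sum_le_sum
            intro i _
            have := hf i
            simp only [mem_filter, mem_univ, true_and] at this
            exact this
        _ = r := by simp
    have hsub : S \ V ⊆ agreeSet f := by
      intro x hx
      simp only [mem_sdiff, hV, mem_biUnion, mem_univ, true_and, not_exists,
        mem_inter, not_and] at hx
      simp only [agreeSet, mem_filter, mem_univ, true_and]
      exact Or.inr (fun i hi => hx.2 i hi hx.1)
    have h1 : S.card ≤ (S \ V).card + V.card := card_le_card_sdiff_add_card
    have h2 : t ≤ (S \ V).card := by omega
    exact le_trans h2 (card_le_card hsub)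
  · -- counting
    have key : (Finset.univ.filter
        (fun B : Finset (Fin n) => (B ∩ S).card ≤ 1)).card
        = ((S.powerset.filter (fun A => A.card ≤ 1)) ×ˢ Sᶜ.powerset).card := by
      apply Finset.card_nbij' (fun B => (B ∩ S, B \ S)) (fun p => p.1 ∪ p.2)
      · intro B hB
        simp only [mem_coe, mem_filter, mem_univ, true_and] at hB
        simp only [mem_coe, mem_product, mem_filter, mem_powerset]
        refine ⟨⟨inter_subset_right, hB⟩, ?_⟩
        intro x hx
        simp only [mem_sdiff] at hx
        simp [mem_compl, hx.2]
      · rintro ⟨A, C⟩ hp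
        simp only [mem_coe, mem_product, mem_filter, mem_powerset] at hp
        simp only [mem_coe, mem_filter, mem_univ, true_and]
        have : (A ∪ C) ∩ S = A := by
          ext x
          simp only [mem_inter, mem_union]
          constructor
          · rintro ⟨hx | hx, hxS⟩
            · exact hx
            · exact absurd hxS (by simpa using hp.2 hx)
          · intro hx
            exact ⟨Or.inl hx, hp.1.1 hx⟩
        rw [this]
        exact hp.1.2
      · intro B _
        ext x
        simp only [mem_union, mem_inter, mem_sdiff]
        tauto
      · rintro ⟨A, C⟩ hp
        simp only [mem_coe, mem_product, mem_filter, mem_powerset] at hp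
        have hAS : A ⊆ S := hp.1.1
        have hCS : ∀ x ∈ C, x ∉ S := fun x hx => by simpa using hp.2 hx
        have e1 : (A ∪ C) ∩ S = A := by
          ext x
          simp only [mem_inter, mem_union]
          constructor
          · rintro ⟨hx | hx, hxS⟩
            · exact hx
            · exact absurd hxS (hCS x hx)
          · intro hx
            exact ⟨Or.inl hx, hAS hx⟩
        have e2 : (A ∪ C) \ S = C := by
          ext x
          simp only [mem_sdiff, mem_union]
          constructor
          · rintro ⟨hx | hx, hxS⟩
            · exact absurd (hAS hx) hxS
            · exact hx
          · intro hx
            exact ⟨Or.inr hx, hCS x hx⟩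
        simp [e1, e2]
    rw [key, Finset.card_product]
    have hsmall : (S.powerset.filter (fun A => A.card ≤ 1)).card = r + t + 1 := by
      haveI : Nonempty (Fin n) := ⟨⟨0, by omega⟩⟩
      have : S.powerset.filter (fun A => A.card ≤ 1)
          = insert ∅ (S.image (fun a => {a})) := by
        ext A
        simp only [mem_filter, mem_powerset, mem_insert, mem_image]
        constructor
        · rintro ⟨hAS, hA1⟩
          rcases Finset.card_le_one_iff_subset_singleton.mp hA1 with ⟨a, ha⟩
          rcases Finset.subset_singleton_iff.mp ha with rfl | rfl
          · exact Or.inl rfl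
          · exact Or.inr ⟨a, hAS (by simp), rfl⟩
        · rintro (rfl | ⟨a, ha, rfl⟩)
          · simp
          · simp [Finset.singleton_subset_iff.mpr ha]
      rw [this, Finset.card_insert_of_notMem (by simp),
        Finset.card_image_of_injective _ (fun a b hab => by
          simpa using hab), hScard]
    have hbig : (Sᶜ.powerset).card = 2 ^ (n - r - t) := by
      rw [Finset.card_powerset, Finset.card_compl, hScard, Fintype.card_fin]
      congr 1
      omega
    rw [hsmall, hbig]
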